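/- arXiv:0902.2622 — 3 statements merged into one kernel-verified Lean document; each statement's English description precedes it below -/
import Mathlib

section
/- Let T and S be unitary operators on Hilbert spaces H and K respectively, let α ∈ (1/2, 1], and let P be a bounded operator on H with ‖P‖ ≤ 1. Suppose there is a sequence of integers (nₖ) with T^{nₖ} converging in the weak operator topology to αI + (1-α)P, and that S^{nₖ} converges weakly to 0 (in the sense that ⟨S^{nₖ}g, g'⟩ → 0 for all g, g' ∈ K). Then any bounded operator J : K → H satisfying T J = J S is zero. -/
open Filter
open scoped InnerProductSpace Topology

/-- If `T^{n_k}` converges weakly to `αI + (1-α)P` with `α > 1/2`, `‖P‖ ≤ 1`,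
and `S^{n_k}` converges weakly to `0`, then any bounded operator `J` with `T J = J S`
vanishes. -/
theorem stmt1 {H K : Type*}
    [NormedAddCommGroup H] [InnerProductSpace ℂ H] [CompleteSpace H]
    [NormedAddCommGroup K] [InnerProductSpace ℂ K] [CompleteSpace K]
    (T : H ≃ₗᵢ[ℂ] H) (S : K ≃ₗᵢ[ℂ] K)
    (α : ℝ) (hα : 1 / 2 < α) (hα1 : α ≤ 1)
    (P : H →L[ℂ] H) (hP : ‖P‖ ≤ 1)
    (n : ℕ → ℤ)
    (hT : ∀ f f' : H, Tendsto (fun k => ⟪(T ^ n k) f, f'⟫_ℂ) atTop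
      (𝓝 ⟪(α : ℂ) • f + ((1 : ℂ) - (α : ℂ)) • P f, f'⟫_ℂ))
    (hS : ∀ g g' : K, Tendsto (fun k => ⟪(S ^ n k) g, g'⟫_ℂ) atTop (𝓝 0))
    (J : K →L[ℂ] H) (hJ : ∀ g : K, T (J g) = J (S g)) :
    J = 0 := by
  -- `T⁻¹` also intertwines
  have hJinv : ∀ g : K, T⁻¹ (J g) = J (S⁻¹ g) := by
    intro g
    apply T.injective
    have : T (T⁻¹ (J g)) = J g := by
      simp [LinearIsometryEquiv.inv_def]
    rw [this, hJ]
    congr 1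
    simp [LinearIsometryEquiv.inv_def]
  -- `T^m` intertwines for all integers m
  have hpow : ∀ (m : ℤ) (g : K), (T ^ m) (J g) = J ((S ^ m) g) := by
    intro m
    induction m using Int.induction_on with
    | zero => simp
    | succ i ih =>
      intro g
      have hT' : T ^ ((i : ℤ) + 1) = T ^ (i : ℤ) * T := by
        rw [zpow_add_one]
      have hS' : S ^ ((i : ℤ) + 1) = S ^ (i : ℤ) * S := by
        rw [zpow_add_one]
      rw [hT', hS']
      simp only [LinearIsometryEquiv.coe_mul, Function.comp_apply]
      rw [hJ g, ih]
    | pred i ih =>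
      intro g
      have hT' : T ^ (-(i : ℤ) - 1) = T ^ (-(i : ℤ)) * T⁻¹ := by
        rw [zpow_sub_one]
      have hS' : S ^ (-(i : ℤ) - 1) = S ^ (-(i : ℤ)) * S⁻¹ := by
        rw [zpow_sub_one]
      rw [hT', hS']
      simp only [LinearIsometryEquiv.coe_mul, Function.comp_apply]
      rw [hJinv g, ih]
  -- key: for every g, the vector v = α Jg + (1-α) P Jg is 0
  have key : ∀ g : K, (α : ℂ) • J g + ((1 : ℂ) - (α : ℂ)) • P (J g) = 0 := by
    intro g
    set v := (α : ℂ) • J g + ((1 : ℂ) - (α : ℂ)) • P (J g) with hv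
    have hvf : ∀ f' : H, ⟪v, f'⟫_ℂ = 0 := by
      intro f'
      have h1 : Tendsto (fun k => ⟪(T ^ n k) (J g), f'⟫_ℂ) atTop (𝓝 ⟪v, f'⟫_ℂ) :=
        hT (J g) f'
      have h2 : Tendsto (fun k => ⟪(T ^ n k) (J g), f'⟫_ℂ) atTop (𝓝 0) := by
        have heq : (fun k => ⟪(T ^ n k) (J g), f'⟫_ℂ)
            = fun k => ⟪(S ^ n k) g, (ContinuousLinearMap.adjoint J) f'⟫_ℂ := by
          funext k
          rw [hpow (n k) g, ContinuousLinearMap.adjoint_inner_right]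
        rw [heq]
        exact hS g _
      exact tendsto_nhds_unique h1 h2
    have := hvf v
    rwa [inner_self_eq_zero] at this
  -- conclude J g = 0
  ext g
  have hv := key g
  have hnorm : ‖(α : ℂ) • J g‖ = ‖((1 : ℂ) - (α : ℂ)) • P (J g)‖ := by
    have : (α : ℂ) • J g = -(((1 : ℂ) - (α : ℂ)) • P (J g)) := by
      rw [eq_neg_iff_add_eq_zero]; exact hv
    rw [this, norm_neg]
  have hα0 : (0 : ℝ) < α := lt_trans (by norm_num) hα
  have h1α : (0 : ℝ) ≤ 1 - α := by linarith
  have hL : ‖(α : ℂ) • J g‖ = α * ‖J g‖ := by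
    rw [norm_smul, Complex.norm_real, Real.norm_eq_abs, abs_of_pos hα0]
  have hR : ‖((1 : ℂ) - (α : ℂ)) • P (J g)‖ ≤ (1 - α) * ‖J g‖ := by
    rw [norm_smul]
    have h1 : ‖(1 : ℂ) - (α : ℂ)‖ = 1 - α := by
      rw [show (1 : ℂ) - (α : ℂ) = ((1 - α : ℝ) : ℂ) by push_cast; ring,
        Complex.norm_real, Real.norm_eq_abs, abs_of_nonneg h1α]
    rw [h1]
    have hPJ : ‖P (J g)‖ ≤ ‖J g‖ := by
      calc ‖P (J g)‖ ≤ ‖P‖ * ‖J g‖ := P.le_opNorm _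
        _ ≤ 1 * ‖J g‖ := by
            exact mul_le_mul_of_nonneg_right hP (norm_nonneg _)
        _ = ‖J g‖ := one_mul _
    exact mul_le_mul_of_nonneg_left hPJ h1α
  have hle : α * ‖J g‖ ≤ (1 - α) * ‖J g‖ := by rw [← hL, hnorm]; exact hR
  have hz : ‖J g‖ = 0 := by nlinarith [norm_nonneg (J g)]
  simpa [norm_eq_zero] using hz
end

section
/- Let T be an ergodic invertible measure-preserving transformation of a standard probability space (X, 𝒜, μ), and S an ergodic invertible measure-preserving transformation of (Y, ℬ, ν), with T × S ergodic on the product. Let J : L²(X,μ) → L²(Y,ν) be a Markov operator intertwining U_T and U_S (J U_T = U_S J, J and J* positive, J𝟙 = 𝟙, J*𝟙 = 𝟙). Suppose there is α ∈ (0,1], a Markov operator P on L²(X,μ), and a sequence (nₖ) such that U_T^{nₖ} → αI + (1-α)P weakly, and suppose S is mixing (⟨U_S^n g, g'⟩ → ν-product limit, i.e., correlations vanish on L²₀). Then αJf + (1-α)JPf = ∫f dμ for all f ∈ L²(X,μ). -/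
open Filter MeasureTheory
open scoped Topology ENNReal InnerProductSpace

/-- Let `T`, `S` be ergodic invertible measure-preserving transformations
with `T × S` ergodic, `J` a Markov operator intertwining the Koopman operators `U_T` and
`U_S`, `S` mixing, and suppose `U_T^{n_k} → αI + (1-α)P` weakly for a Markov operator `P`.
Then `αJf + (1-α)JPf = ∫ f dμ` (as a constant function) for every `f ∈ L²(X,μ)`. -/
theorem stmt12 {X Y : Type*} [MeasurableSpace X] [MeasurableSpace Y]
    (μ : Measure X) [IsProbabilityMeasure μ] (ν : Measure Y) [IsProbabilityMeasure ν]
    (T : Equiv.Perm X) (hT : MeasurePreserving T μ μ) (hTinv : MeasurePreserving T.symm μ μ)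
    (S : Equiv.Perm Y) (hS : MeasurePreserving S ν ν) (hSinv : MeasurePreserving S.symm ν ν)
    (hTerg : Ergodic T μ) (hSerg : Ergodic S ν)
    (hprod : Ergodic (Prod.map T S) (μ.prod ν))
    (UT : Lp ℝ 2 μ →L[ℝ] Lp ℝ 2 μ)
    (hUT : ∀ f : Lp ℝ 2 μ, (UT f : X → ℝ) =ᵐ[μ] fun x => f (T.symm x))
    (US : Lp ℝ 2 ν →L[ℝ] Lp ℝ 2 ν)
    (hUS : ∀ g : Lp ℝ 2 ν, (US g : Y → ℝ) =ᵐ[ν] fun y => g (S.symm y))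
    (oneX : Lp ℝ 2 μ) (honeX : (oneX : X → ℝ) =ᵐ[μ] fun _ => 1)
    (oneY : Lp ℝ 2 ν) (honeY : (oneY : Y → ℝ) =ᵐ[ν] fun _ => 1)
    -- J is a Markov operator intertwining U_T and U_S
    (J : Lp ℝ 2 μ →L[ℝ] Lp ℝ 2 ν)
    (hJint : ∀ f : Lp ℝ 2 μ, J (UT f) = US (J f))
    (hJpos : ∀ f : Lp ℝ 2 μ, 0 ≤ f → 0 ≤ J f)
    (hJone : J oneX = oneY)
    (hJadjone : ∀ f : Lp ℝ 2 μ, ⟪J f, oneY⟫_ℝ = ⟪f, oneX⟫_ℝ)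
    -- P is a Markov operator and U_T^{n_k} → αI + (1-α)P weakly
    (α : ℝ) (hα : 0 < α) (hα1 : α ≤ 1)
    (P : Lp ℝ 2 μ →L[ℝ] Lp ℝ 2 μ)
    (hPpos : ∀ f : Lp ℝ 2 μ, 0 ≤ f → 0 ≤ P f)
    (hPone : P oneX = oneX)
    (hPadjone : ∀ f : Lp ℝ 2 μ, ⟪P f, oneX⟫_ℝ = ⟪f, oneX⟫_ℝ)
    (n : ℕ → ℕ) (hn : Tendsto n atTop atTop)
    (hconv : ∀ f g : Lp ℝ 2 μ, Tendsto (fun k => ⟪(UT ^ n k) f, g⟫_ℝ) atTop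
      (𝓝 (α * ⟪f, g⟫_ℝ + (1 - α) * ⟪P f, g⟫_ℝ)))
    -- S is mixing: correlations vanish on L²₀
    (hmix : ∀ g g' : Lp ℝ 2 ν, ⟪g, oneY⟫_ℝ = 0 → ⟪g', oneY⟫_ℝ = 0 →
      Tendsto (fun m : ℕ => ⟪(US ^ m) g, g'⟫_ℝ) atTop (𝓝 0)) :
    ∀ f : Lp ℝ 2 μ, α • J f + (1 - α) • J (P f) = (∫ x, f x ∂μ) • oneY := by

  intro f
  classical
  -- real inner product on L2 as an integral
  have hinnerX : ∀ g g' : Lp ℝ 2 μ, ⟪g, g'⟫_ℝ = ∫ a, g a * g' a ∂μ := by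
    intro g g'; rw [MeasureTheory.L2.inner_def]; simp [RCLike.inner_apply]; congr 1; funext a; ring
  have hinnerY : ∀ g g' : Lp ℝ 2 ν, ⟪g, g'⟫_ℝ = ∫ a, g a * g' a ∂ν := by
    intro g g'; rw [MeasureTheory.L2.inner_def]; simp [RCLike.inner_apply]; congr 1; funext a; ring
  -- ⟪g, oneX⟫ = ∫ g
  have hfone : ∀ g : Lp ℝ 2 μ, ⟪g, oneX⟫_ℝ = ∫ x, g x ∂μ := by
    intro g
    rw [hinnerX]
    refine integral_congr_ae ?_
    filter_upwards [honeX] with x hx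
    rw [hx]; ring
  have honeYone : ⟪oneY, oneY⟫_ℝ = 1 := by
    rw [hinnerY]
    have : (∫ a, oneY a * oneY a ∂ν) = ∫ a, (1 : ℝ) ∂ν := by
      refine integral_congr_ae ?_
      filter_upwards [honeY] with y hy
      rw [hy]; ring
    simp [this]
  -- US fixes oneY
  have hUSone : US oneY = oneY := by
    refine Lp.ext ?_
    filter_upwards [hUS oneY, honeY,
      hSinv.quasiMeasurePreserving.ae_eq_comp (honeY)] with y h1 h2 h3
    rw [h1]
    simpa using h3.trans (by simp [h2])
  have hUSpow : ∀ m : ℕ, (US ^ m) oneY = oneY := by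
    intro m
    induction m with
    | zero => simp
    | succ m ih => rw [pow_succ, ContinuousLinearMap.mul_apply, hUSone, ih]
  -- J intertwines powers
  have hJiter : ∀ (m : ℕ) (g : Lp ℝ 2 μ), J ((UT ^ m) g) = (US ^ m) (J g) := by
    intro m
    induction m with
    | zero => intro g; simp
    | succ m ih =>
      intro g
      rw [pow_succ, pow_succ, ContinuousLinearMap.mul_apply,
        ContinuousLinearMap.mul_apply, ih, hJint]
  -- key orthogonality: the combination is orthogonal to mean-zero g'
  have key : ∀ g' : Lp ℝ 2 ν, ⟪g', oneY⟫_ℝ = 0 →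
      α * ⟪J f, g'⟫_ℝ + (1 - α) * ⟪J (P f), g'⟫_ℝ = 0 := by
    intro g' hg'
    set g₀ := ContinuousLinearMap.adjoint J g' with hg₀
    have h1 : Tendsto (fun k => ⟪(US ^ n k) (J f), g'⟫_ℝ) atTop
        (𝓝 (α * ⟪J f, g'⟫_ℝ + (1 - α) * ⟪J (P f), g'⟫_ℝ)) := by
      have := hconv f g₀
      have e1 : ⟪f, g₀⟫_ℝ = ⟪J f, g'⟫_ℝ := by
        rw [hg₀, ContinuousLinearMap.adjoint_inner_right]
      have e2 : ⟪P f, g₀⟫_ℝ = ⟪J (P f), g'⟫_ℝ := by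
        rw [hg₀, ContinuousLinearMap.adjoint_inner_right]
      rw [e1, e2] at this
      refine this.congr fun k => ?_
      rw [hg₀, ContinuousLinearMap.adjoint_inner_right, hJiter]
    have h2 : Tendsto (fun k => ⟪(US ^ n k) (J f), g'⟫_ℝ) atTop (𝓝 0) := by
      set c := ⟪J f, oneY⟫_ℝ with hc
      set h := J f - c • oneY with hh
      have hhzero : ⟪h, oneY⟫_ℝ = 0 := by
        rw [hh, inner_sub_left, real_inner_smul_left, honeYone]
        simp [hc]
      have hm := (hmix h g' hhzero hg').comp hn
      refine hm.congr fun k => ?_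
      have ho : ⟪oneY, g'⟫_ℝ = 0 := by rw [real_inner_comm]; exact hg'
      have : (US ^ n k) (J f) = (US ^ n k) h + c • oneY := by
        rw [hh, map_sub, _root_.map_smul, hUSpow]
        abel
      rw [Function.comp_apply, this, inner_add_left, real_inner_smul_left, ho]
      ring
    exact tendsto_nhds_unique h1 h2
  -- the inner products with oneY
  have hJf1 : ⟪J f, oneY⟫_ℝ = ∫ x, f x ∂μ := by rw [hJadjone, hfone]
  have hJPf1 : ⟪J (P f), oneY⟫_ℝ = ∫ x, f x ∂μ := by
    rw [hJadjone, hPadjone, hfone]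
  set w := α • J f + (1 - α) • J (P f) - (∫ x, f x ∂μ) • oneY with hw
  have hwone : ⟪w, oneY⟫_ℝ = 0 := by
    rw [hw, inner_sub_left, inner_add_left, real_inner_smul_left,
      real_inner_smul_left, real_inner_smul_left, hJf1, hJPf1, honeYone]
    ring
  have hwall : ∀ g : Lp ℝ 2 ν, ⟪w, g⟫_ℝ = 0 := by
    intro g
    set g' := g - ⟪g, oneY⟫_ℝ • oneY with hg'def
    have hg'z : ⟪g', oneY⟫_ℝ = 0 := by
      rw [hg'def, inner_sub_left, real_inner_smul_left, honeYone]
      ring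
    have hwg' : ⟪w, g'⟫_ℝ = 0 := by
      have hk := key g' hg'z
      have ho : ⟪oneY, g'⟫_ℝ = 0 := by rw [real_inner_comm]; exact hg'z
      rw [hw, inner_sub_left, inner_add_left, real_inner_smul_left,
        real_inner_smul_left, real_inner_smul_left, hk, ho]
      ring
    have : g = g' + ⟪g, oneY⟫_ℝ • oneY := by rw [hg'def]; abel
    rw [this, inner_add_right, hwg', real_inner_smul_right, hwone]
    ring
  have : w = 0 := by
    have := hwall w
    rwa [real_inner_self_eq_norm_sq, pow_eq_zero_iff (by norm_num), norm_eq_zero] at this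
  have := sub_eq_zero.mp this
  exact this
end

section
/- Let U be a unitary operator on a Hilbert space H and suppose (U^{nₖ}) converges in the weak operator topology to the operator V = Σ_{k=0}^∞ 2^{-(k+1)} U^k (the series converging in operator norm). If S is a unitary operator on K with ⟨Sⁿg, g'⟩ → 0 for all g,g' ∈ K as n → ∞, and U has no eigenvalues on its restriction to a U-invariant subspace H₀ with V injective on H₀, then any bounded J : K → H₀ with U J = J S vanishes. -/
open Filter
open scoped InnerProductSpace Topology

/-- Suppose the powers `U^{n_k}` of a unitary `U` converge in the weak
operator topology to `V = ∑_{k≥0} 2^{-(k+1)} U^k`, `S` is a mixing unitary on `K`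
(`⟨Sⁿg,g'⟩ → 0`), `H₀` is a `U`-invariant closed subspace on which `U` has no eigenvalues
and `V` is injective.  Then any bounded `J : K → H` with range in `H₀` and `U J = J S`
vanishes.  (Spectral disjointness of the historical Chacon map from mixing maps.) -/
theorem stmt19 {H K : Type*}
    [NormedAddCommGroup H] [InnerProductSpace ℂ H] [CompleteSpace H]
    [NormedAddCommGroup K] [InnerProductSpace ℂ K] [CompleteSpace K]
    (U : H ≃ₗᵢ[ℂ] H) (S : K ≃ₗᵢ[ℂ] K)
    (n : ℕ → ℕ)
    (hV : ∀ f g : H, Tendsto (fun k => ⟪(U ^ n k) f, g⟫_ℂ) atTop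
      (𝓝 ⟪∑' m : ℕ, ((2 : ℂ) ^ (m + 1))⁻¹ • (U ^ m) f, g⟫_ℂ))
    (hS : ∀ g g' : K, Tendsto (fun m : ℕ => ⟪(S ^ m) g, g'⟫_ℂ) atTop (𝓝 0))
    (H₀ : Submodule ℂ H) (hH₀closed : IsClosed (H₀ : Set H))
    (hH₀inv : ∀ x ∈ H₀, U x ∈ H₀)
    (hnoeig : ∀ (c : ℂ), ∀ f ∈ H₀, U f = c • f → f = 0)
    (hVinj : ∀ f ∈ H₀, (∑' m : ℕ, ((2 : ℂ) ^ (m + 1))⁻¹ • (U ^ m) f) = 0 → f = 0)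
    (J : K →L[ℂ] H) (hJrange : ∀ g : K, J g ∈ H₀)
    (hJint : ∀ g : K, U (J g) = J (S g)) :
    J = 0 := by
  classical
  have key : ∀ (m : ℕ) (g : K), (U ^ m) (J g) = J ((S ^ m) g) := by
    intro m
    induction m with
    | zero => intro g; simp
    | succ m ih =>
      intro g
      have h1 : (U ^ (m + 1)) (J g) = U ((U ^ m) (J g)) := by rw [pow_succ']; rfl
      have h2 : (S ^ (m + 1)) g = S ((S ^ m) g) := by rw [pow_succ']; rfl
      rw [h1, ih, hJint, h2]
  have hmem : ∀ (p : ℕ) (x : H), x ∈ H₀ → (U ^ p) x ∈ H₀ := by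
    intro p
    induction p with
    | zero => intro x hx; simpa using hx
    | succ p ih =>
      intro x hx
      have h1 : (U ^ (p + 1)) x = (U ^ p) (U x) := by rw [pow_succ]; rfl
      rw [h1]
      exact ih _ (hH₀inv x hx)
  ext g
  simp only [ContinuousLinearMap.zero_apply]
  set f : H := J g with hf
  by_cases hn : Tendsto n atTop atTop
  · -- unbounded case
    apply hVinj _ (hJrange g)
    apply ext_inner_right ℂ
    intro h
    rw [inner_zero_left]
    have h0 : Tendsto (fun k => ⟪(U ^ n k) f, h⟫_ℂ) atTop (𝓝 0) := by
      have := (hS g ((ContinuousLinearMap.adjoint J) h)).comp hn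
      refine this.congr fun k => ?_
      simp only [Function.comp, hf, key, ContinuousLinearMap.adjoint_inner_right]
    exact tendsto_nhds_unique (hV (J g) h) h0
  · -- bounded case: some value m occurs frequently
    obtain ⟨b, hb⟩ : ∃ b, ∃ᶠ k in atTop, n k < b := by
      rw [tendsto_atTop] at hn
      push_neg at hn
      obtain ⟨b, hb⟩ := hn
      exact ⟨b, hb⟩
    obtain ⟨m, hm⟩ : ∃ m, ∃ᶠ k in atTop, n k = m := by
      by_contra hcon
      push_neg at hcon
      have hall : ∀ᶠ k in atTop, ∀ m ∈ Finset.range b, n k ≠ m :=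
        (Filter.eventually_all_finset (Finset.range b)).mpr fun m _ => hcon m
      obtain ⟨k, hk1, hk2⟩ := (hb.and_eventually hall).exists
      exact hk2 (n k) (Finset.mem_range.mpr hk1) rfl
    -- U^m = V weakly
    have hUm : ∀ (x h : H),
        ⟪(U ^ m) x, h⟫_ℂ = ⟪∑' j : ℕ, ((2 : ℂ) ^ (j + 1))⁻¹ • (U ^ j) x, h⟫_ℂ := by
      intro x h
      exact (tendsto_nhds_unique_of_frequently_eq (hV x h)
        (tendsto_const_nhds (x := ⟪(U ^ m) x, h⟫_ℂ))
        (hm.mono fun k hk => by rw [hk])).symm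
    have hveq : (∑' j : ℕ, ((2 : ℂ) ^ (j + 1))⁻¹ • (U ^ j) f) = (U ^ m) f :=
      (ext_inner_right ℂ fun h => hUm f h).symm
    -- summability
    have hsummable : Summable (fun j : ℕ => ((2 : ℂ) ^ (j + 1))⁻¹ • (U ^ j) f) := by
      apply Summable.of_norm
      have hcoef : ∀ j : ℕ, ((2:ℝ) ^ (j + 1))⁻¹ = 1/2 * (1/2)^j := by
        intro j
        rw [pow_succ, mul_inv, one_div, inv_pow, mul_comm]
      have heq : ∀ j : ℕ, ‖((2 : ℂ) ^ (j + 1))⁻¹ • (U ^ j) f‖ = (1/2) * (1/2)^j * ‖f‖ := by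
        intro j
        rw [norm_smul, LinearIsometryEquiv.norm_map]
        congr 1
        rw [norm_inv, norm_pow, Complex.norm_ofNat]
        exact hcoef j
      exact Summable.congr ((summable_geometric_two.mul_left (1/2)).mul_right ‖f‖)
        fun j => (heq j).symm
    have hhs : HasSum (fun j : ℕ => ((2 : ℂ) ^ (j + 1))⁻¹ • (U ^ j) f)
        (∑' j : ℕ, ((2 : ℂ) ^ (j + 1))⁻¹ • (U ^ j) f) := hsummable.hasSum
    have hinner : HasSum (fun j : ℕ => ((2 : ℂ) ^ (j + 1))⁻¹ * ⟪(U ^ m) f, (U ^ j) f⟫_ℂ)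
        ((‖f‖ : ℂ) ^ 2) := by
      have := (innerSL ℂ ((U ^ m) f)).hasSum hhs
      simp only [innerSL_apply_apply, inner_smul_right] at this
      rwa [hveq, inner_self_eq_norm_sq_to_K, LinearIsometryEquiv.norm_map] at this
    -- real parts
    have hre : HasSum (fun j : ℕ => ((2:ℝ) ^ (j + 1))⁻¹ *
        (⟪(U ^ m) f, (U ^ j) f⟫_ℂ).re) (‖f‖ ^ 2) := by
      have h1 := Complex.hasSum_re hinner
      have h2 : ((‖f‖ : ℂ) ^ 2).re = ‖f‖ ^ 2 := by
        rw [← Complex.ofReal_pow, Complex.ofReal_re]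
      rw [h2] at h1
      refine h1.congr_fun fun j => ?_
      rw [show ((2 : ℂ) ^ (j + 1))⁻¹ = ((((2:ℝ) ^ (j + 1))⁻¹ : ℝ) : ℂ) by push_cast; ring,
        Complex.re_ofReal_mul]
    have hc : HasSum (fun j : ℕ => ((2:ℝ) ^ (j + 1))⁻¹ * ‖f‖ ^ 2) (‖f‖ ^ 2) := by
      have h1 : HasSum (fun j : ℕ => ((2:ℝ) ^ (j + 1))⁻¹) 1 := by
        have h2 := hasSum_geometric_two.mul_left (2⁻¹ : ℝ)
        rw [show (2⁻¹:ℝ) * 2 = 1 by norm_num] at h2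
        refine h2.congr_fun fun j => ?_
        rw [pow_succ, mul_inv, one_div, inv_pow, mul_comm]
      simpa using h1.mul_right (‖f‖ ^ 2)
    have hzero : HasSum (fun j : ℕ => ((2:ℝ) ^ (j + 1))⁻¹ *
        (‖f‖ ^ 2 - (⟪(U ^ m) f, (U ^ j) f⟫_ℂ).re)) 0 := by
      have h1 := hc.sub hre
      simp only [sub_self] at h1
      refine h1.congr_fun fun j => ?_
      ring
    have hnonneg : ∀ j : ℕ, 0 ≤ ((2:ℝ) ^ (j + 1))⁻¹ *
        (‖f‖ ^ 2 - (⟪(U ^ m) f, (U ^ j) f⟫_ℂ).re) := by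
      intro j
      apply mul_nonneg (by positivity)
      have hcs := re_inner_le_norm (𝕜 := ℂ) ((U ^ m) f) ((U ^ j) f)
      rw [LinearIsometryEquiv.norm_map, LinearIsometryEquiv.norm_map] at hcs
      simp only [RCLike.re_to_complex] at hcs
      have hsq : ‖f‖ ^ 2 = ‖f‖ * ‖f‖ := sq ‖f‖
      linarith
    have hterm := (hasSum_zero_iff_of_nonneg hnonneg).mp hzero
    -- term at j = m + 1 gives U h = h for h = U^m f
    have hm1 : (⟪(U ^ m) f, (U ^ (m+1)) f⟫_ℂ).re = ‖f‖ ^ 2 := by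
      have h1 : ((2:ℝ) ^ (m + 1 + 1))⁻¹ *
          (‖f‖ ^ 2 - (⟪(U ^ m) f, (U ^ (m+1)) f⟫_ℂ).re) = 0 := by
        have := congrFun hterm (m + 1)
        simpa using this
      have hcpos : (0:ℝ) < ((2:ℝ) ^ (m + 1 + 1))⁻¹ := by positivity
      have h2 := (mul_eq_zero.mp h1).resolve_left (ne_of_gt hcpos)
      linarith
    set h : H := (U ^ m) f with hh
    have hUh : U h = h := by
      have hexp : (U ^ (m+1)) f = U h := by rw [pow_succ']; rfl
      have hnorm : ‖U h‖ = ‖h‖ := U.norm_map h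
      have hnormh : ‖h‖ = ‖f‖ := LinearIsometryEquiv.norm_map _ f
      have hre2 : (⟪U h, h⟫_ℂ).re = ‖f‖ ^ 2 := by
        have h2 : ⟪U h, h⟫_ℂ = (starRingEnd ℂ) ⟪h, U h⟫_ℂ := (inner_conj_symm _ _).symm
        rw [h2, Complex.conj_re, ← hexp]
        exact hm1
      have hsq : ‖U h - h‖ ^ 2 = 0 := by
        rw [norm_sub_sq (𝕜 := ℂ), hnorm, hnormh]
        simp only [RCLike.re_to_complex]
        rw [hre2]
        ring
      have h4 : ‖U h - h‖ = 0 := by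
        nlinarith [norm_nonneg (U h - h)]
      exact sub_eq_zero.mp (norm_eq_zero.mp h4)
    have hhH₀ : h ∈ H₀ := hmem m f (hJrange g)
    have hh0 : h = 0 := hnoeig 1 h hhH₀ (by simpa using hUh)
    have hfn : ‖f‖ = 0 := by
      have h3 : ‖(U ^ m) f‖ = ‖f‖ := LinearIsometryEquiv.norm_map (U ^ m) f
      rw [← hh, hh0, norm_zero] at h3
      exact h3.symm
    simpa [hf] using norm_eq_zero.mp hfn
end
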